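/- arXiv:0903.4965 — 3 statements merged into one kernel-verified Lean document; each statement's English description precedes it below -/
import Mathlib

section
/- Let p be a prime, r ≥ 1, and a_1 ≥ a_2 ≥ ⋯ ≥ a_r ≥ 1 integers. Then the integer E(p^{a_1}, p^{a_2}, …, p^{a_r}) is odd if and only if p = 2, a_1 = 1 (i.e., all a_j = 1), and r is even. -/
/-- The von Sterneck function `Φ(k,n) = μ(n/gcd(k,n)) * φ(n) / φ(n/gcd(k,n))`. -/
noncomputable def vonSterneck (k n : ℕ) : ℚ :=
  (ArithmeticFunction.moebius (n / Nat.gcd k n) : ℚ) * (Nat.totient n : ℚ) /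
    (Nat.totient (n / Nat.gcd k n) : ℚ)

/-- The orbicyclic function `E(m_1,…,m_r)`. -/
noncomputable def orbE {r : ℕ} (m : Fin r → ℕ) : ℚ :=
  (∑ k ∈ Finset.Icc 1 (Finset.univ.lcm m), ∏ j, vonSterneck k (m j)) /
    ((Finset.univ.lcm m : ℕ) : ℚ)

/-- The polynomial `h_s(x) = ((x-1)^(s-1) + (-1)^s)/x`. -/
noncomputable def hpoly (s : ℕ) (x : ℚ) : ℚ := ((x - 1) ^ (s - 1) + (-1) ^ s) / x

lemma totient_pp {p : ℕ} (hp : p.Prime) {a : ℕ} (ha : 1 ≤ a) :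
    ((p ^ a).totient : ℚ) = (p : ℚ) ^ (a - 1) * ((p : ℚ) - 1) := by
  rw [Nat.totient_prime_pow hp ha]
  push_cast [Nat.cast_sub hp.one_le]
  ring

lemma vs_dvd {p : ℕ} (hp : p.Prime) {a k : ℕ} (h : p ^ a ∣ k) :
    vonSterneck k (p ^ a) = ((p ^ a).totient : ℚ) := by
  unfold vonSterneck
  rw [Nat.gcd_eq_right h, Nat.div_self (pow_pos hp.pos a)]
  simp

lemma vs_zero {p : ℕ} (hp : p.Prime) {a k : ℕ} (ha : 1 ≤ a) (h : ¬ p ^ (a - 1) ∣ k) :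
    vonSterneck k (p ^ a) = 0 := by
  obtain ⟨b, hb, hg⟩ := (Nat.dvd_prime_pow hp).mp (Nat.gcd_dvd_right k (p ^ a))
  have hb2 : b + 1 < a := by
    by_contra hc
    push_neg at hc
    exact h (dvd_trans (pow_dvd_pow p (by omega)) (hg ▸ Nat.gcd_dvd_left k (p ^ a)))
  have hns : ¬ Squarefree (p ^ (a - b)) := by
    intro hsq
    exact hp.not_isUnit (hsq p (dvd_trans (by rw [← pow_two]; exact pow_dvd_pow p (by omega))
      dvd_rfl))
  unfold vonSterneck
  rw [hg, Nat.pow_div (by omega) hp.pos,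
    ArithmeticFunction.moebius_eq_zero_of_not_squarefree hns]
  simp

lemma vs_sub {p : ℕ} (hp : p.Prime) {a k : ℕ} (ha : 1 ≤ a) (h1 : p ^ (a - 1) ∣ k)
    (h2 : ¬ p ^ a ∣ k) : vonSterneck k (p ^ a) = -((p : ℚ) ^ (a - 1)) := by
  have hg : Nat.gcd k (p ^ a) = p ^ (a - 1) := by
    obtain ⟨b, hb, hgb⟩ := (Nat.dvd_prime_pow hp).mp (Nat.gcd_dvd_right k (p ^ a))
    have hdv : p ^ (a - 1) ∣ p ^ a := pow_dvd_pow p (by omega)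
    have h3 : p ^ (a - 1) ∣ p ^ b := hgb ▸ Nat.dvd_gcd h1 hdv
    have h4 : a - 1 ≤ b := (Nat.pow_dvd_pow_iff_le_right hp.one_lt).mp h3
    have h5 : b ≠ a := fun he => h2 (he ▸ hgb ▸ Nat.gcd_dvd_left k (p ^ a))
    rw [hgb]; congr 1; omega
  have hp2 : (2 : ℚ) ≤ (p : ℚ) := by exact_mod_cast hp.two_le
  have hpq : ((p : ℚ) - 1) ≠ 0 := by intro hcon; linarith
  unfold vonSterneck
  rw [hg, Nat.pow_div (by omega) hp.pos, show a - (a - 1) = 1 by omega, pow_one,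
    ArithmeticFunction.moebius_apply_prime hp, totient_pp hp ha, Nat.totient_prime hp,
    Nat.cast_sub hp.one_le]
  push_cast
  field_simp

theorem orbE_prime_pow_odd_iff (p r : ℕ) (hp : p.Prime) (hr : 1 ≤ r)
    (a : Fin r → ℕ) (ha : ∀ j, 1 ≤ a j) (hmono : Antitone a) :
    Odd (orbE (fun j => p ^ a j)).num ↔ (p = 2 ∧ a ⟨0, hr⟩ = 1 ∧ Even r) := by
  classical
  set j0 : Fin r := ⟨0, hr⟩ with hj0
  set a1 : ℕ := a j0 with ha1
  have hle : ∀ j, a j ≤ a1 := fun j => hmono (by simp [hj0, Fin.le_def])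
  have ha1pos : 1 ≤ a1 := ha j0
  obtain ⟨b, hab⟩ : ∃ b, a1 = b + 1 := ⟨a1 - 1, by omega⟩
  have hlcm : Finset.univ.lcm (fun j => p ^ a j) = p ^ a1 :=
    Nat.dvd_antisymm (Finset.lcm_dvd fun j _ => pow_dvd_pow p (hle j))
      (Finset.dvd_lcm (Finset.mem_univ j0))
  set s : ℕ := (Finset.univ.filter (fun j => a j = a1)).card with hs
  have hs1 : 1 ≤ s :=
    Finset.card_pos.mpr ⟨j0, Finset.mem_filter.mpr ⟨Finset.mem_univ _, rfl⟩⟩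
  obtain ⟨t, hst⟩ : ∃ t, s = t + 1 := ⟨s - 1, by omega⟩
  set P : ℕ := ∏ j ∈ Finset.univ.filter (fun j => ¬ a j = a1), (p ^ a j).totient with hP
  have hqpos : 0 < p ^ b := pow_pos hp.pos b
  obtain ⟨N, hN⟩ : (p : ℤ) ∣ ((p : ℤ) - 1) ^ t + (-1) ^ (t + 1) := by
    have h1 : ((p : ℤ) - 1) ≡ -1 [ZMOD p] := Int.ModEq.symm
      (Int.modEq_iff_dvd.mpr ⟨1, by ring⟩)
    have h2 : ((p : ℤ) - 1) ^ t + (-1) ^ (t + 1) ≡ (-1) ^ t + (-1) ^ (t + 1) [ZMOD p] :=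
      (h1.pow t).add_right _
    have h3 : ((-1 : ℤ)) ^ t + (-1) ^ (t + 1) = 0 := by ring
    exact Int.modEq_zero_iff_dvd.mp (h3 ▸ h2)
  -- product value for multiples of p^b that are not multiples of p^a1
  have hC : ∀ k : ℕ, p ^ b ∣ k → ¬ p ^ a1 ∣ k →
      (∏ j, vonSterneck k (p ^ a j)) = (-((p : ℚ) ^ b)) ^ s * (P : ℚ) := by
    intro k hk1 hk2
    rw [← Finset.prod_filter_mul_prod_filter_not Finset.univ (fun j => a j = a1)]
    congr 1
    · have heq : ∀ j ∈ Finset.univ.filter (fun j => a j = a1),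
          vonSterneck k (p ^ a j) = -((p : ℚ) ^ b) := by
        intro j hj
        have hje : a j = a1 := (Finset.mem_filter.mp hj).2
        rw [hje, show (b : ℕ) = a1 - 1 by omega]
        exact vs_sub hp ha1pos (by rw [show a1 - 1 = b by omega]; exact hk1) hk2
      rw [Finset.prod_congr rfl heq, Finset.prod_const, hs]
    · have hne : ∀ j ∈ Finset.univ.filter (fun j => ¬ a j = a1),
          vonSterneck k (p ^ a j) = ((p ^ a j).totient : ℚ) := by
        intro j hj
        have hjne : ¬ a j = a1 := (Finset.mem_filter.mp hj).2
        exact vs_dvd hp (dvd_trans (pow_dvd_pow p (by have := hle j; omega)) hk1)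
      rw [Finset.prod_congr rfl hne, ← Nat.cast_prod, hP]
  -- product value at k = p^a1
  have hD : (∏ j, vonSterneck (p ^ a1) (p ^ a j))
      = (((p : ℚ) - 1) * (p : ℚ) ^ b) ^ s * (P : ℚ) := by
    rw [← Finset.prod_filter_mul_prod_filter_not Finset.univ (fun j => a j = a1)]
    congr 1
    · have heq : ∀ j ∈ Finset.univ.filter (fun j => a j = a1),
          vonSterneck (p ^ a1) (p ^ a j) = ((p : ℚ) - 1) * (p : ℚ) ^ b := by
        intro j hj
        have hje : a j = a1 := (Finset.mem_filter.mp hj).2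
        rw [hje, vs_dvd hp dvd_rfl, totient_pp hp ha1pos, show a1 - 1 = b by omega]
        ring
      rw [Finset.prod_congr rfl heq, Finset.prod_const, hs]
    · have hne : ∀ j ∈ Finset.univ.filter (fun j => ¬ a j = a1),
          vonSterneck (p ^ a1) (p ^ a j) = ((p ^ a j).totient : ℚ) := by
        intro j _
        exact vs_dvd hp (pow_dvd_pow p (hle j))
      rw [Finset.prod_congr rfl hne, ← Nat.cast_prod, hP]
  -- the full sum
  have hsum : (∑ k ∈ Finset.Icc 1 (p ^ a1), ∏ j, vonSterneck k (p ^ a j))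
      = ((p - 1 : ℕ) : ℚ) * ((-((p : ℚ) ^ b)) ^ s * (P : ℚ))
        + (((p : ℚ) - 1) * (p : ℚ) ^ b) ^ s * (P : ℚ) := by
    have hzero : ∀ k ∈ Finset.Icc 1 (p ^ a1),
        (∏ j, vonSterneck k (p ^ a j)) ≠ 0 → p ^ b ∣ k := by
      intro k _ hk
      by_contra hnd
      refine hk (Finset.prod_eq_zero (Finset.mem_univ j0) ?_)
      rw [← ha1]
      exact vs_zero hp ha1pos (by rw [show a1 - 1 = b by omega]; exact hnd)
    rw [← Finset.sum_filter_of_ne hzero]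
    have hbij : (∑ k ∈ (Finset.Icc 1 (p ^ a1)).filter (fun k => p ^ b ∣ k),
          ∏ j, vonSterneck k (p ^ a j))
        = ∑ u ∈ Finset.Icc 1 p, ∏ j, vonSterneck (u * p ^ b) (p ^ a j) := by
      refine Finset.sum_nbij' (fun k => k / p ^ b) (fun u => u * p ^ b)
        ?_ ?_ ?_ ?_ ?_
      · intro k hk
        obtain ⟨hk1, hk2⟩ := Finset.mem_filter.mp hk
        obtain ⟨hk3, hk4⟩ := Finset.mem_Icc.mp hk1
        obtain ⟨c, rfl⟩ := hk2
        show p ^ b * c / p ^ b ∈ Finset.Icc 1 p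
        rw [Nat.mul_div_cancel_left c hqpos]
        refine Finset.mem_Icc.mpr ⟨?_, ?_⟩
        · rcases Nat.eq_zero_or_pos c with rfl | hc
          · simp at hk3
          · exact hc
        · have : p ^ b * c ≤ p ^ b * p := by
            rw [← pow_succ, ← hab]; exact hk4
          exact Nat.le_of_mul_le_mul_left this hqpos
      · intro u hu
        obtain ⟨hu1, hu2⟩ := Finset.mem_Icc.mp hu
        refine Finset.mem_filter.mpr ⟨Finset.mem_Icc.mpr ⟨?_, ?_⟩, dvd_mul_left _ _⟩
        · exact Nat.one_le_iff_ne_zero.mpr (Nat.mul_ne_zero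
            (Nat.one_le_iff_ne_zero.mp hu1) hqpos.ne')
        · calc u * p ^ b ≤ p * p ^ b := Nat.mul_le_mul_right _ hu2
            _ = p ^ a1 := by rw [hab, pow_succ]; ring
      · intro k hk
        exact Nat.div_mul_cancel (Finset.mem_filter.mp hk).2
      · intro u _
        exact Nat.mul_div_cancel u hqpos
      · intro k hk
        rw [Nat.div_mul_cancel (Finset.mem_filter.mp hk).2]
    rw [hbij]
    have hsplit : ∀ g : ℕ → ℚ,
        (∑ u ∈ Finset.Icc 1 p, g u) = (∑ u ∈ Finset.Icc 1 (p - 1), g u) + g p := by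
      intro g
      obtain ⟨p', hp'⟩ : ∃ p', p = p' + 1 := ⟨p - 1, by have := hp.one_le; omega⟩
      rw [hp', Finset.sum_Icc_succ_top (by omega), Nat.add_sub_cancel]
    rw [hsplit]
    have hconst : ∀ u ∈ Finset.Icc 1 (p - 1),
        (∏ j, vonSterneck (u * p ^ b) (p ^ a j)) = (-((p : ℚ) ^ b)) ^ s * (P : ℚ) := by
      intro u hu
      obtain ⟨hu1, hu2⟩ := Finset.mem_Icc.mp hu
      refine hC _ (dvd_mul_left _ _) ?_
      rintro ⟨c, hc⟩
      have hc2 : u * p ^ b = (p * c) * p ^ b := by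
        rw [hc, hab, pow_succ]; ring
      have hc3 : u = p * c := Nat.eq_of_mul_eq_mul_right hqpos hc2
      rcases Nat.eq_zero_or_pos c with rfl | hcpos
      · omega
      · have : p ≤ u := by
          rw [hc3]; exact Nat.le_mul_of_pos_right p hcpos
        have := hp.two_le
        omega
    rw [Finset.sum_congr rfl hconst, Finset.sum_const, Nat.card_Icc,
      Nat.add_sub_cancel, nsmul_eq_mul]
    have hpa1 : p * p ^ b = p ^ a1 := by rw [hab, pow_succ]; ring
    rw [hpa1, hD]
  -- the value of orbE
  have hNQ : ((p : ℚ) - 1) ^ t + (-1) ^ (t + 1) = (p : ℚ) * (N : ℚ) := by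
    exact_mod_cast congrArg (fun z : ℤ => (z : ℚ)) hN
  have hE : orbE (fun j => p ^ a j)
      = ((((p : ℤ) - 1) * (p : ℤ) ^ (t * b) * (P : ℤ) * N : ℤ) : ℚ) := by
    unfold orbE
    rw [hlcm, hsum, div_eq_iff (by exact_mod_cast (pow_pos hp.pos a1).ne' : ((p ^ a1 : ℕ) : ℚ) ≠ 0)]
    push_cast [Nat.cast_sub hp.one_le]
    rw [hab, hst, neg_pow, mul_pow, ← pow_mul]
    linear_combination (((p : ℚ) - 1) * (p : ℚ) ^ (t * b) * (P : ℚ) * (p : ℚ) ^ b) * hNQ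
  rw [hE, Rat.num_intCast]
  -- parity analysis
  rcases hp.eq_two_or_odd' with rfl | hodd
  · constructor
    · intro hM
      rw [Int.odd_mul] at hM
      obtain ⟨hM1, hMN⟩ := hM
      rw [Int.odd_mul] at hM1
      obtain ⟨hM2, _⟩ := hM1
      rw [Int.odd_mul] at hM2
      obtain ⟨_, hMpow⟩ := hM2
      have htb : t * b = 0 := by
        rcases Int.odd_pow.mp hMpow with h | h
        · rw [Int.odd_iff] at h; omega
        · exact h
      have hsev : Even s := by
        by_contra hso
        have hsodd : Odd s := Nat.odd_iff.mpr (by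
          have := Nat.even_iff.not.mp hso; omega)
        rw [← hst, Odd.neg_one_pow hsodd] at hN
        norm_num at hN
        have hN0 : N = 0 := by omega
        rw [hN0] at hMN
        norm_num at hMN
      have hb0 : b = 0 := by
        have ht0 : t ≠ 0 := by
          intro h0
          rw [h0] at hst
          have := Nat.even_iff.mp hsev
          omega
        rcases Nat.mul_eq_zero.mp htb with h | h
        · exact absurd h ht0
        · exact h
      have ha11 : a1 = 1 := by omega
      have hall : ∀ j, a j = a1 := fun j =>
        le_antisymm (hle j) (by rw [ha11]; exact ha j)
      have hsreq : s = r := by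
        rw [hs, Finset.filter_true_of_mem (fun j _ => hall j), Finset.card_univ,
          Fintype.card_fin]
      exact ⟨rfl, ha11, by rw [← hsreq]; exact hsev⟩
    · rintro ⟨-, h1, hevr⟩
      have hb0 : b = 0 := by omega
      have hall : ∀ j, a j = a1 := fun j =>
        le_antisymm (hle j) (by rw [h1]; exact ha j)
      have hsreq : s = r := by
        rw [hs, Finset.filter_true_of_mem (fun j _ => hall j), Finset.card_univ,
          Fintype.card_fin]
      have hP1 : P = 1 := by
        rw [hP, Finset.filter_eq_empty_iff.mpr (fun j _ => not_not_intro (hall j)),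
          Finset.prod_empty]
      have hse : Even s := hsreq ▸ hevr
      have hNv : N = 1 := by
        rw [← hst, Even.neg_one_pow hse] at hN
        norm_num at hN
        omega
      rw [hP1, hNv, hb0]
      norm_num
  · have hne2 : p ≠ 2 := by
      rintro rfl
      have := Nat.odd_iff.mp hodd
      omega
    have hev : Even (((p : ℤ) - 1) * (p : ℤ) ^ (t * b) * (P : ℤ) * N) := by
      obtain ⟨c, hc⟩ := hodd
      have hev1 : Even ((p : ℤ) - 1) := ⟨c, by push_cast [hc]; ring⟩
      exact ((hev1.mul_right _).mul_right _).mul_right _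
    exact iff_of_false (Int.not_odd_iff_even.mpr hev) (fun h => hne2 h.1)
end

section
/- Let (m_1, m_2, …, m_r) be a tuple of positive integers with r ≥ 1, and suppose m_1 = m_1'·m_1'' with gcd(m_1', m_1'') = 1. Then E(m_1, m_2, …, m_r) = E(m_1', m_1'', m_2, …, m_r). -/
/-- The von Sterneck function is multiplicative in its second argument. -/
lemma vonSterneck_mul (k a b : ℕ) (ha : 0 < a) (hb : 0 < b) (h : Nat.Coprime a b) :
    vonSterneck k (a * b) = vonSterneck k a * vonSterneck k b := by
  have hgcd : Nat.gcd k (a * b) = Nat.gcd k a * Nat.gcd k b := Nat.Coprime.gcd_mul k h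
  have hda : Nat.gcd k a ∣ a := Nat.gcd_dvd_right k a
  have hdb : Nat.gcd k b ∣ b := Nat.gcd_dvd_right k b
  have hdiv : a * b / (Nat.gcd k a * Nat.gcd k b) = (a / Nat.gcd k a) * (b / Nat.gcd k b) :=
    (Nat.div_mul_div_comm hda hdb).symm
  have hcop' : Nat.Coprime (a / Nat.gcd k a) (b / Nat.gcd k b) :=
    Nat.Coprime.coprime_dvd_left (Nat.div_dvd_of_dvd hda)
      (Nat.Coprime.coprime_dvd_right (Nat.div_dvd_of_dvd hdb) h)
  unfold vonSterneck
  rw [hgcd, hdiv, Nat.totient_mul h, Nat.totient_mul hcop',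
    ArithmeticFunction.isMultiplicative_moebius.map_mul_of_coprime hcop']
  push_cast
  rw [div_mul_div_comm]
  ring

lemma lcm_univ_succ {n : ℕ} (f : Fin (n + 1) → ℕ) :
    Finset.univ.lcm f = Nat.lcm (f 0) (Finset.univ.lcm (Fin.tail f)) := by
  rw [Fin.univ_succ, Finset.cons_eq_insert, Finset.lcm_insert, Finset.map_eq_image,
    Finset.lcm_image]
  rfl

theorem orbE_split_coprime {r : ℕ} (m : Fin (r + 1) → ℕ) (hm : ∀ j, 0 < m j)
    (m₁' m₁'' : ℕ) (h₁' : 0 < m₁') (h₁'' : 0 < m₁'')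
    (hsplit : m 0 = m₁' * m₁'') (hcop : Nat.Coprime m₁' m₁'') :
    orbE m = orbE (Fin.cons m₁' (Fin.cons m₁'' (Fin.tail m))) := by
  have hlcm : Finset.univ.lcm (Fin.cons m₁' (Fin.cons m₁'' (Fin.tail m)) : Fin (r+2) → ℕ)
      = Finset.univ.lcm m := by
    rw [lcm_univ_succ (Fin.cons m₁' (Fin.cons m₁'' (Fin.tail m))), Fin.cons_zero,
      Fin.tail_cons, lcm_univ_succ (Fin.cons m₁'' (Fin.tail m)), Fin.cons_zero, Fin.tail_cons,
      lcm_univ_succ m, hsplit, ← Nat.lcm_assoc, Nat.Coprime.lcm_eq_mul hcop]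
  have hprod : ∀ k,
      ∏ j, vonSterneck k ((Fin.cons m₁' (Fin.cons m₁'' (Fin.tail m)) : Fin (r+2) → ℕ) j)
      = ∏ j, vonSterneck k (m j) := by
    intro k
    rw [Fin.prod_univ_succ, Fin.prod_univ_succ, Fin.cons_zero,
      Fin.prod_univ_succ fun j => vonSterneck k (m j)]
    simp only [Fin.tail_cons, Fin.cons_zero, Fin.cons_succ]
    rw [hsplit, vonSterneck_mul k m₁' m₁'' h₁' h₁'' hcop, mul_assoc]
    rfl
  unfold orbE
  rw [hlcm]
  congr 1
  exact Finset.sum_congr rfl fun k _ => (hprod k).symm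
end

section
/- For any tuple of positive integers (m_1,…,m_r) with m = lcm(m_1,…,m_r), one has E(m_1,…,m_r) = ∏_{p prime, p | m} (p−1)^{r(p)−s(p)+1} · p^{v(p)} · h_{s(p)}(p) (the empty product, for m = 1, being 1). -/
open Finset

lemma vS_mod {N n : ℕ} (k : ℕ) (h : n ∣ N) : vonSterneck (k % N) n = vonSterneck k n := by
  have : Nat.gcd (k % N) n = Nat.gcd k n := by
    rw [Nat.gcd_comm, Nat.gcd_rec, Nat.mod_mod_of_dvd _ h, ← Nat.gcd_rec, Nat.gcd_comm]
  unfold vonSterneck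
  rw [this]

lemma vS_mul (k : ℕ) {a b : ℕ} (ha : 0 < a) (hb : 0 < b) (hab : Nat.Coprime a b) :
    vonSterneck k (a * b) = vonSterneck k a * vonSterneck k b := by
  have hga : Nat.gcd k a ∣ a := Nat.gcd_dvd_right _ _
  have hgb : Nat.gcd k b ∣ b := Nat.gcd_dvd_right _ _
  have hg : Nat.gcd k (a*b) = Nat.gcd k a * Nat.gcd k b := Nat.Coprime.gcd_mul k hab
  have hdiv : (a*b) / (Nat.gcd k a * Nat.gcd k b) = (a / Nat.gcd k a) * (b / Nat.gcd k b) :=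
    (Nat.div_mul_div_comm hga hgb).symm
  have hcop : Nat.Coprime (a / Nat.gcd k a) (b / Nat.gcd k b) :=
    Nat.Coprime.coprime_dvd_left (Nat.div_dvd_of_dvd hga)
      (Nat.Coprime.coprime_dvd_right (Nat.div_dvd_of_dvd hgb) hab)
  unfold vonSterneck
  rw [hg, hdiv, Nat.totient_mul hab, Nat.totient_mul hcop,
    ArithmeticFunction.isMultiplicative_moebius.map_mul_of_coprime hcop]
  push_cast
  ring

lemma vS_pp_full {p : ℕ} (hp : p.Prime) (a k : ℕ) (h : p ^ a ∣ k) :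
    vonSterneck k (p ^ a) = (Nat.totient (p ^ a) : ℚ) := by
  have hg : Nat.gcd k (p ^ a) = p ^ a := Nat.gcd_eq_right h
  unfold vonSterneck
  rw [hg, Nat.div_self (pow_pos hp.pos a)]
  simp

lemma vS_pp_sub {p : ℕ} (hp : p.Prime) (a k : ℕ) (ha : 1 ≤ a)
    (h1 : p ^ (a - 1) ∣ k) (h2 : ¬ p ^ a ∣ k) :
    vonSterneck k (p ^ a) = -((p : ℚ) ^ (a - 1)) := by
  have hg : Nat.gcd k (p ^ a) = p ^ (a - 1) := by
    have hd1 : p ^ (a-1) ∣ Nat.gcd k (p ^ a) :=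
      Nat.dvd_gcd h1 (pow_dvd_pow p (Nat.sub_le a 1))
    have hd2 : Nat.gcd k (p ^ a) ∣ p ^ a := Nat.gcd_dvd_right _ _
    obtain ⟨i, hi, hgi⟩ := (Nat.dvd_prime_pow hp).mp hd2
    have hia : a - 1 ≤ i := by
      by_contra hlt
      push_neg at hlt
      exact absurd (hgi ▸ hd1) (by
        intro hdd
        exact absurd (Nat.pow_dvd_pow_iff_le_right hp.one_lt |>.mp hdd) (by omega))
    have : i ≠ a := by
      rintro rfl
      exact h2 (hgi ▸ Nat.gcd_dvd_left k _)
    have : i = a - 1 := by omega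
    rw [hgi, this]
  unfold vonSterneck
  have hq : p ^ a / p ^ (a - 1) = p := by
    rw [Nat.pow_div (by omega) hp.pos]
    simp [Nat.sub_sub_self ha]
  rw [hg, hq, ArithmeticFunction.moebius_apply_prime hp, Nat.totient_prime hp,
    Nat.totient_prime_pow hp (by omega)]
  have hne : (p : ℚ) - 1 ≠ 0 := by
    have := hp.one_lt
    intro h
    have : (p : ℚ) = 1 := by linarith
    exact_mod_cast absurd this (by exact_mod_cast Nat.ne_of_gt hp.one_lt)
  push_cast [Nat.cast_sub hp.one_le]
  field_simp

lemma vS_pp_zero {p : ℕ} (hp : p.Prime) (a k : ℕ) (ha : 1 ≤ a)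
    (h1 : ¬ p ^ (a - 1) ∣ k) :
    vonSterneck k (p ^ a) = 0 := by
  have hd2 : Nat.gcd k (p ^ a) ∣ p ^ a := Nat.gcd_dvd_right _ _
  obtain ⟨i, hi, hgi⟩ := (Nat.dvd_prime_pow hp).mp hd2
  have hil : i < a - 1 := by
    by_contra hle
    push_neg at hle
    exact h1 (dvd_trans (pow_dvd_pow p hle) (hgi ▸ Nat.gcd_dvd_left k _))
  have hq : p ^ a / Nat.gcd k (p ^ a) = p ^ (a - i) := by
    rw [hgi, Nat.pow_div (by omega) hp.pos]
  unfold vonSterneck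
  rw [hq, ArithmeticFunction.moebius_apply_prime_pow hp (by omega)]
  rw [if_neg (by omega)]
  simp

lemma sum_zmod (N : ℕ) [NeZero N] (f : ℕ → ℚ) :
    ∑ x : ZMod N, f x.val = ∑ k ∈ range N, f k := by
  refine Finset.sum_nbij' (fun x => x.val) (fun k => (k : ZMod N)) ?_ ?_ ?_ ?_ ?_
  · intro x _; exact mem_range.mpr (ZMod.val_lt x)
  · intro k _; exact mem_univ _
  · intro x _; exact ZMod.natCast_zmod_val x
  · intro k hk; exact ZMod.val_cast_of_lt (mem_range.mp hk)
  · intro x _; rfl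

lemma local_sum {r p : ℕ} (hp : p.Prime) {a : ℕ} (ha : 1 ≤ a) (b : Fin r → ℕ)
    (hb : ∀ j, b j ≤ a) (hex : ∃ j, b j = a) :
    ∑ k ∈ range (p ^ a), ∏ j, vonSterneck k (p ^ b j)
      = ∏ j, ((p ^ b j : ℕ).totient : ℚ)
        + ((p : ℚ) - 1) *
          ∏ j, (if b j = a then -((p : ℚ) ^ (a - 1)) else ((p ^ b j : ℕ).totient : ℚ)) := by
  obtain ⟨j0, hj0⟩ := hex
  set F : ℕ → ℚ := fun k => ∏ j, vonSterneck k (p ^ b j) with hF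
  have hstep1 : ∑ k ∈ range (p ^ a), F k
      = ∑ k ∈ (range (p ^ a)).filter (fun k => p ^ (a - 1) ∣ k), F k := by
    refine (Finset.sum_filter_of_ne ?_).symm
    intro k _ hne
    by_contra hdvd
    exact hne (Finset.prod_eq_zero (mem_univ j0)
      (by rw [hj0]; exact vS_pp_zero hp a k ha hdvd))
  have hset : (range (p ^ a)).filter (fun k => p ^ (a - 1) ∣ k)
      = (range p).image (fun u => p ^ (a - 1) * u) := by
    ext k
    simp only [mem_filter, mem_range, mem_image]
    constructor
    · rintro ⟨hk, c, rfl⟩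
      refine ⟨c, ?_, by ring⟩
      by_contra hc
      push_neg at hc
      have : p ^ a ≤ p ^ (a - 1) * c := by
        calc p ^ a = p ^ (a - 1) * p := by
              rw [← pow_succ]; congr 1; omega
          _ ≤ p ^ (a - 1) * c := Nat.mul_le_mul_left _ hc
      omega
    · rintro ⟨u, hu, rfl⟩
      refine ⟨?_, Dvd.intro u rfl⟩
      calc p ^ (a - 1) * u < p ^ (a - 1) * p := by
            exact (Nat.mul_lt_mul_left (pow_pos hp.pos _)).mpr hu
        _ = p ^ a := by rw [← pow_succ]; congr 1; omega
  have hinj : ∀ x ∈ range p, ∀ y ∈ range p,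
      p ^ (a - 1) * x = p ^ (a - 1) * y → x = y := by
    intro x _ y _ h
    exact Nat.eq_of_mul_eq_mul_left (pow_pos hp.pos _) h
  have hstep2 : ∑ k ∈ (range (p ^ a)).filter (fun k => p ^ (a - 1) ∣ k), F k
      = ∑ u ∈ range p, F (p ^ (a - 1) * u) := by
    rw [hset, Finset.sum_image hinj]
  have hsplit : range p = insert 0 (Ico 1 p) := by
    ext x
    simp only [mem_range, mem_insert, mem_Ico]
    have := hp.pos
    omega
  have hF0 : F (p ^ (a - 1) * 0) = ∏ j, ((p ^ b j : ℕ).totient : ℚ) := by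
    rw [mul_zero, hF]
    exact Finset.prod_congr rfl fun j _ => vS_pp_full hp (b j) 0 (dvd_zero _)
  have hFu : ∀ u ∈ Ico 1 p, F (p ^ (a - 1) * u)
      = ∏ j, (if b j = a then -((p : ℚ) ^ (a - 1)) else ((p ^ b j : ℕ).totient : ℚ)) := by
    intro u hu
    rw [mem_Ico] at hu
    refine Finset.prod_congr rfl fun j _ => ?_
    by_cases hja : b j = a
    · rw [if_pos hja, hja]
      refine vS_pp_sub hp a _ ha (Dvd.intro u rfl) ?_
      intro hdvd
      have hpa : p ^ a = p ^ (a - 1) * p := by rw [← pow_succ]; congr 1; omega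
      rw [hpa] at hdvd
      have : p ∣ u := (Nat.mul_dvd_mul_iff_left (pow_pos hp.pos (a - 1))).mp hdvd
      have := Nat.le_of_dvd (by omega) this
      omega
    · rw [if_neg hja]
      refine vS_pp_full hp (b j) _ (dvd_mul_of_dvd_left (pow_dvd_pow p ?_) u)
      have := hb j
      omega
  rw [hstep1, hstep2, hsplit, Finset.sum_insert (by simp), hF0,
    Finset.sum_congr rfl hFu, Finset.sum_const, Nat.card_Ico, nsmul_eq_mul]
  push_cast [Nat.cast_sub hp.one_le]
  ring

lemma sum_zmod' (N : ℕ) [NeZero N] (f : ℕ → ℚ) :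
    ∑ x : ZMod N, f x.val = ∑ k ∈ range N, f k := by
  refine Finset.sum_nbij' (fun x => x.val) (fun k => (k : ZMod N)) ?_ ?_ ?_ ?_ ?_
  · intro x _; exact mem_range.mpr (ZMod.val_lt x)
  · intro k _; exact mem_univ _
  · intro x _; exact ZMod.natCast_zmod_val x
  · intro k hk; exact ZMod.val_cast_of_lt (mem_range.mp hk)
  · intro x _; rfl

lemma crt_split {A B : ℕ} (hA : 0 < A) (hB : 0 < B) (hcop : Nat.Coprime A B) (f g : ℕ → ℚ)
    (hf : ∀ k, f (k % A) = f k) (hg : ∀ k, g (k % B) = g k) :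
    ∑ k ∈ range (A * B), f k * g k = (∑ k ∈ range A, f k) * (∑ k ∈ range B, g k) := by
  haveI : NeZero A := ⟨hA.ne'⟩
  haveI : NeZero B := ⟨hB.ne'⟩
  haveI : NeZero (A * B) := ⟨(Nat.mul_pos hA hB).ne'⟩
  rw [← sum_zmod' (A * B) (fun k => f k * g k), ← sum_zmod' A f, ← sum_zmod' B g]
  let e := ZMod.chineseRemainder hcop
  have he : ∀ x : ZMod (A * B), (e x).1.val = x.val % A ∧ (e x).2.val = x.val % B := by
    intro x
    have h1 : e x = (((x.val : ℕ) : ZMod A), ((x.val : ℕ) : ZMod B)) := by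
      conv_lhs => rw [← ZMod.natCast_zmod_val x]
      rw [map_natCast]
      exact Prod.ext (by simp) (by simp)
    rw [h1]
    exact ⟨ZMod.val_natCast _ _, ZMod.val_natCast _ _⟩
  calc ∑ x : ZMod (A * B), f x.val * g x.val
      = ∑ x : ZMod (A * B), f (e x).1.val * g (e x).2.val := by
        refine Finset.sum_congr rfl fun x _ => ?_
        rw [(he x).1, (he x).2, hf, hg]
    _ = ∑ y : ZMod A × ZMod B, f y.1.val * g y.2.val :=
        Fintype.sum_equiv e.toEquiv _ _ (fun x => rfl)
    _ = (∑ u : ZMod A, f u.val) * (∑ v : ZMod B, g v.val) := by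
        rw [Finset.sum_mul_sum, ← Finset.sum_product']
        rfl

lemma lcm_ne_zero' {ι : Type*} [DecidableEq ι] (s : Finset ι) (f : ι → ℕ) (hf : ∀ i ∈ s, f i ≠ 0) :
    s.lcm f ≠ 0 := by
  intro h
  rw [Finset.lcm_eq_zero_iff] at h
  obtain ⟨i, hi, hfi⟩ := h
  exact hf i hi hfi

lemma lcm_factorization' {ι : Type*} [DecidableEq ι] (s : Finset ι) (f : ι → ℕ) (hf : ∀ i ∈ s, f i ≠ 0)
    (p : ℕ) : (s.lcm f).factorization p = s.sup fun i => (f i).factorization p := by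
  induction s using Finset.induction_on with
  | empty => simp
  | insert a s hnotmem ih =>
    rw [Finset.lcm_insert, Finset.sup_insert]
    have h1 : f a ≠ 0 := hf a (mem_insert_self a s)
    have h2 : s.lcm f ≠ 0 := lcm_ne_zero' s f (fun i hi => hf i (mem_insert_of_mem hi))
    have : lcm (f a) (s.lcm f) = Nat.lcm (f a) (s.lcm f) := rfl
    rw [this, Nat.factorization_lcm h1 h2, ← ih (fun i hi => hf i (mem_insert_of_mem hi))]
    simp [Finsupp.sup_apply]

lemma vS_one (k : ℕ) : vonSterneck k 1 = 1 := by
  unfold vonSterneck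
  simp

lemma crt_sum : ∀ (M : ℕ) {r : ℕ} (m : Fin r → ℕ), (∀ j, 0 < m j) →
    Finset.univ.lcm m = M →
    ∑ k ∈ range M, ∏ j, vonSterneck k (m j)
      = ∏ p ∈ M.primeFactors, ∑ k ∈ range (p ^ M.factorization p),
          ∏ j, vonSterneck k (p ^ ((m j).factorization p)) := by
  intro M
  induction M using Nat.strong_induction_on with
  | _ M IH =>
  intro r m hm hlcm
  have hM0 : M ≠ 0 := by
    rw [← hlcm]
    exact lcm_ne_zero' _ _ (fun j _ => (hm j).ne')
  by_cases hM1 : M = 1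
  · subst hM1
    have hmj : ∀ j, m j = 1 := fun j =>
      Nat.eq_one_of_dvd_one (hlcm ▸ Finset.dvd_lcm (mem_univ j))
    simp [hmj, vS_one]
  -- setup
  have hp : (M.minFac).Prime := Nat.minFac_prime hM1
  set p := M.minFac with hpdef
  set a := M.factorization p with hadef
  have ha : 1 ≤ a := hp.factorization_pos_of_dvd hM0 (Nat.minFac_dvd M)
  set A := p ^ a with hAdef
  set B := M / p ^ a with hBdef
  have hMAB : A * B = M := Nat.ordProj_mul_ordCompl_eq_self M p
  have hApos : 0 < A := pow_pos hp.pos a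
  have hBpos : 0 < B := Nat.ordCompl_pos p hM0
  have hpB : ¬ p ∣ B := Nat.not_dvd_ordCompl hp hM0
  have hcop : Nat.Coprime A B := Nat.Coprime.pow_left _ ((hp.coprime_iff_not_dvd).mpr hpB)
  set b : Fin r → ℕ := fun j => (m j).factorization p with hbdef
  set m' : Fin r → ℕ := fun j => m j / p ^ b j with hm'def
  have hmj : ∀ j, p ^ b j * m' j = m j := fun j =>
    Nat.ordProj_mul_ordCompl_eq_self (m j) p
  have hm'pos : ∀ j, 0 < m' j := fun j => Nat.ordCompl_pos p (hm j).ne'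
  have hpm' : ∀ j, ¬ p ∣ m' j := fun j => Nat.not_dvd_ordCompl hp (hm j).ne'
  have hba : ∀ j, b j ≤ a := by
    intro j
    rw [hadef, ← hlcm, lcm_factorization' _ _ (fun i _ => (hm i).ne')]
    exact Finset.le_sup (mem_univ j)
  have hlcm' : Finset.univ.lcm m' = B := by
    apply Nat.dvd_antisymm
    · exact Finset.lcm_dvd fun j _ =>
        Nat.ordCompl_dvd_ordCompl_of_dvd (hlcm ▸ Finset.dvd_lcm (mem_univ j)) p
    · have hMd : M ∣ A * Finset.univ.lcm m' := by
        rw [← hlcm]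
        refine Finset.lcm_dvd fun j _ => ?_
        rw [← hmj j]
        exact mul_dvd_mul (pow_dvd_pow p (hba j)) (Finset.dvd_lcm (mem_univ j))
      rw [← hMAB] at hMd
      exact (mul_dvd_mul_iff_left hApos.ne').mp hMd
  -- the sum splits
  set f : ℕ → ℚ := fun k => ∏ j, vonSterneck k (p ^ b j) with hfdef
  set g : ℕ → ℚ := fun k => ∏ j, vonSterneck k (m' j) with hgdef
  have hFfg : ∀ k, ∏ j, vonSterneck k (m j) = f k * g k := by
    intro k
    rw [hfdef, hgdef, ← Finset.prod_mul_distrib]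
    refine Finset.prod_congr rfl fun j _ => ?_
    rw [← hmj j]
    exact vS_mul k (pow_pos hp.pos _) (hm'pos j)
      (Nat.Coprime.pow_left _ ((hp.coprime_iff_not_dvd).mpr (hpm' j)))
  have hf : ∀ k, f (k % A) = f k := fun k =>
    Finset.prod_congr rfl fun j _ => vS_mod k (pow_dvd_pow p (hba j))
  have hg : ∀ k, g (k % B) = g k := fun k =>
    Finset.prod_congr rfl fun j _ =>
      vS_mod k (hlcm' ▸ Finset.dvd_lcm (mem_univ j))
  have hsplit : ∑ k ∈ range M, ∏ j, vonSterneck k (m j)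
      = (∑ k ∈ range A, f k) * (∑ k ∈ range B, g k) := by
    have := crt_split hApos hBpos hcop f g hf hg
    rw [hMAB] at this
    rw [← this]
    exact Finset.sum_congr rfl fun k _ => hFfg k
  -- IH on B
  have hBlt : B < M := by
    have h2 : 2 ≤ A := le_trans hp.two_le (Nat.le_self_pow (by omega) p)
    calc B < B * A := by nlinarith
      _ = M := by rw [mul_comm, hMAB]
  have hIH := IH B hBlt m' hm'pos hlcm'
  -- prime factors
  have hpf : M.primeFactors = insert p B.primeFactors := by
    rw [← hMAB, Nat.primeFactors_mul hApos.ne' hBpos.ne',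
      Nat.primeFactors_prime_pow (Nat.one_le_iff_ne_zero.mp ha) hp, Finset.insert_eq]
  have hpnot : p ∉ B.primeFactors := fun hmem => hpB (Nat.dvd_of_mem_primeFactors hmem)
  rw [hsplit, hpf, Finset.prod_insert hpnot, hIH]
  congr 1
  refine Finset.prod_congr rfl fun q hq => ?_
  have hqp : q ≠ p := fun h => hpnot (h ▸ hq)
  have h1 : B.factorization q = M.factorization q := by
    have h := Nat.factorization_ordCompl M p
    calc B.factorization q = ((M / p ^ M.factorization p).factorization) q := rfl
      _ = (M.factorization.erase p) q := by rw [h]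
      _ = M.factorization q := Finsupp.erase_ne hqp
  have h2 : ∀ j, (m' j).factorization q = (m j).factorization q := by
    intro j
    have h := Nat.factorization_ordCompl (m j) p
    calc (m' j).factorization q = ((m j / p ^ (m j).factorization p).factorization) q := rfl
      _ = ((m j).factorization.erase p) q := by rw [h]
      _ = (m j).factorization q := Finsupp.erase_ne hqp
  rw [h1]
  exact Finset.sum_congr rfl fun k _ => Finset.prod_congr rfl fun j _ => by rw [h2 j]

lemma local_value {r p : ℕ} (hp : p.Prime) {a : ℕ} (ha : 1 ≤ a) (b : Fin r → ℕ)
    (hb : ∀ j, b j ≤ a) (hex : ∃ j, b j = a) :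
    (∑ k ∈ range (p ^ a), ∏ j, vonSterneck k (p ^ b j)) / ((p : ℚ) ^ a)
      = ((p : ℚ) - 1) ^
          ((Finset.univ.filter fun j => 1 ≤ b j).card
            - (Finset.univ.filter fun j => b j = a).card + 1)
        * (p : ℚ) ^
          ((∑ j ∈ Finset.univ.filter fun j => 1 ≤ b j, (b j - 1)) + 1 - a)
        * hpoly (Finset.univ.filter fun j => b j = a).card (p : ℚ) := by
  classical
  set sset := Finset.univ.filter fun j : Fin r => b j = a with hsset
  set Uset := Finset.univ.filter fun j : Fin r => 1 ≤ b j ∧ b j ≠ a with hUset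
  set tset := Finset.univ.filter fun j : Fin r => 1 ≤ b j with htset
  have hunion : tset = sset ∪ Uset := by
    ext j
    simp only [htset, hsset, hUset, mem_filter, mem_union, mem_univ, true_and]
    omega
  have hdisj : Disjoint sset Uset := by
    rw [Finset.disjoint_filter]
    intro j _ hj
    simp [hj]
  set s := sset.card with hs
  set u := Uset.card with hu
  set S' := ∑ j ∈ Uset, (b j - 1) with hS'
  have hcard : tset.card = s + u := by rw [hunion, Finset.card_union_of_disjoint hdisj]
  have hsum : ∑ j ∈ tset, (b j - 1) = s * (a - 1) + S' := by
    rw [hunion, Finset.sum_union hdisj]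
    congr 1
    calc ∑ j ∈ sset, (b j - 1) = ∑ _j ∈ sset, (a - 1) :=
          Finset.sum_congr rfl (fun j hj => by
            rw [hsset] at hj
            rw [(mem_filter.mp hj).2])
      _ = s * (a - 1) := by rw [Finset.sum_const, smul_eq_mul]
  have hs1 : 1 ≤ s := by
    obtain ⟨j, hj⟩ := hex
    exact Finset.card_pos.mpr ⟨j, by simp [hsset, hj]⟩
  have hppos : (0:ℚ) < (p:ℚ) := by exact_mod_cast hp.pos
  -- totient of p^n for n ≥ 1, as rationals
  have htot : ∀ n : ℕ, 1 ≤ n → ((p ^ n : ℕ).totient : ℚ) = (p:ℚ)^(n-1) * ((p:ℚ) - 1) := by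
    intro n hn
    rw [Nat.totient_prime_pow hp hn]
    push_cast [Nat.cast_sub hp.one_le]
    ring
  have hP1 : ∏ j, ((p ^ b j : ℕ).totient : ℚ)
      = ((p:ℚ)-1)^(s+u) * (p:ℚ)^(s * (a-1) + S') := by
    rw [← Finset.prod_filter_mul_prod_filter_not Finset.univ (fun j => 1 ≤ b j)]
    have h2 : ∏ j ∈ Finset.univ.filter (fun j => ¬ 1 ≤ b j), ((p ^ b j : ℕ).totient : ℚ)
        = 1 := by
      refine Finset.prod_eq_one fun j hj => ?_
      have : b j = 0 := by have := (mem_filter.mp hj).2; omega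
      simp [this]
    rw [h2, mul_one]
    rw [Finset.prod_congr rfl (fun j hj => htot (b j) (mem_filter.mp hj).2),
      Finset.prod_mul_distrib, Finset.prod_pow_eq_pow_sum, Finset.prod_const]
    rw [← htset, hsum, hcard]
    ring
  have hP2 : ∏ j, (if b j = a then -((p : ℚ) ^ (a - 1)) else ((p ^ b j : ℕ).totient : ℚ))
      = (-1:ℚ)^s * ((p:ℚ)-1)^u * (p:ℚ)^(s * (a-1) + S') := by
    rw [← Finset.prod_filter_mul_prod_filter_not Finset.univ (fun j => b j = a)]
    have h1 : ∏ j ∈ Finset.univ.filter (fun j => b j = a),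
        (if b j = a then -((p : ℚ) ^ (a - 1)) else ((p ^ b j : ℕ).totient : ℚ))
        = (-((p : ℚ) ^ (a - 1)))^s := by
      rw [Finset.prod_congr rfl (fun j hj => if_pos (mem_filter.mp hj).2),
        Finset.prod_const]
    have h2 : ∏ j ∈ Finset.univ.filter (fun j => ¬ b j = a),
        (if b j = a then -((p : ℚ) ^ (a - 1)) else ((p ^ b j : ℕ).totient : ℚ))
        = ((p:ℚ)-1)^u * (p:ℚ)^S' := by
      rw [Finset.prod_congr rfl (fun j hj => if_neg (mem_filter.mp hj).2)]
      rw [← Finset.prod_filter_mul_prod_filter_not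
        (Finset.univ.filter (fun j => ¬ b j = a)) (fun j => 1 ≤ b j)]
      have h3 : ∏ j ∈ (Finset.univ.filter (fun j => ¬ b j = a)).filter (fun j => ¬ 1 ≤ b j),
          ((p ^ b j : ℕ).totient : ℚ) = 1 := by
        refine Finset.prod_eq_one fun j hj => ?_
        have : b j = 0 := by have := (mem_filter.mp hj).2; omega
        simp [this]
      have h4 : (Finset.univ.filter (fun j => ¬ b j = a)).filter (fun j => 1 ≤ b j) = Uset := by
        rw [Finset.filter_filter, hUset]
        congr 1
        ext j
        constructor <;> intro h <;> exact ⟨h.2, h.1⟩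
      rw [h3, mul_one, h4,
        Finset.prod_congr rfl (fun j hj => htot (b j) (mem_filter.mp hj).2.1),
        Finset.prod_mul_distrib, Finset.prod_pow_eq_pow_sum, Finset.prod_const, ← hS', ← hu]
      ring
    rw [h1, h2, neg_pow, ← pow_mul]
    ring
  rw [local_sum hp ha b hb hex, hP1, hP2, hcard, hsum]
  clear_value s u S'
  obtain ⟨s', rfl⟩ : ∃ s', s = s' + 1 := ⟨s - 1, by omega⟩
  obtain ⟨a', rfl⟩ : ∃ a', a = a' + 1 := ⟨a - 1, by omega⟩
  have e1 : s' + 1 + u - (s' + 1) + 1 = u + 1 := by omega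
  have e2 : (s' + 1) * (a' + 1 - 1) + S' + 1 - (a' + 1) = s' * a' + S' := by
    have h : (s' + 1) * (a' + 1 - 1) = s' * a' + a' := by
      simp only [Nat.add_sub_cancel]
      ring
    omega
  rw [e1, e2]
  unfold hpoly
  have hpne : (p:ℚ) ≠ 0 := hppos.ne'
  simp only [Nat.add_sub_cancel]
  field_simp
  ring

theorem orbE_main_formula {r : ℕ} (m : Fin r → ℕ) (hm : ∀ j, 0 < m j) :
    orbE m = ∏ p ∈ (Finset.univ.lcm m).primeFactors,
      (((p : ℚ) - 1) ^
          ((Finset.univ.filter fun j => p ∣ m j).card -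
              (Finset.univ.filter fun j =>
                (m j).factorization p = (Finset.univ.lcm m).factorization p).card + 1) *
        (p : ℚ) ^
          ((∑ j ∈ Finset.univ.filter fun j => 1 ≤ (m j).factorization p,
              ((m j).factorization p - 1)) + 1 - (Finset.univ.lcm m).factorization p) *
        hpoly (Finset.univ.filter fun j =>
          (m j).factorization p = (Finset.univ.lcm m).factorization p).card (p : ℚ)) := by
  classical
  set M := Finset.univ.lcm m with hM
  have hMne : M ≠ 0 := lcm_ne_zero' _ _ (fun j _ => (hm j).ne')
  have hMpos : 0 < M := Nat.pos_of_ne_zero hMne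
  have hper : ∀ k, (∏ j, vonSterneck (k % M) (m j)) = ∏ j, vonSterneck k (m j) :=
    fun k => Finset.prod_congr rfl fun j _ => vS_mod k (hM ▸ Finset.dvd_lcm (mem_univ j))
  have hIcc : ∑ k ∈ Finset.Icc 1 M, ∏ j, vonSterneck k (m j)
      = ∑ k ∈ range M, ∏ j, vonSterneck k (m j) := by
    have h1 : Finset.Icc 1 M = insert M (Finset.Ico 1 M) := by
      ext x
      simp only [Finset.mem_Icc, Finset.mem_insert, Finset.mem_Ico]
      omega
    have h2 : range M = insert 0 (Finset.Ico 1 M) := by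
      ext x
      simp only [Finset.mem_range, Finset.mem_insert, Finset.mem_Ico]
      omega
    rw [h1, h2, Finset.sum_insert (by simp), Finset.sum_insert (by simp)]
    congr 1
    rw [← hper M, Nat.mod_self]
  rw [orbE, ← hM, hIcc, crt_sum M m hm hM.symm]
  have hMprod : ((M : ℕ) : ℚ) = ∏ p ∈ M.primeFactors, (p : ℚ) ^ M.factorization p := by
    conv_lhs => rw [← Nat.factorization_prod_pow_eq_self hMne]
    rw [Finsupp.prod, Nat.support_factorization]
    push_cast
    rfl
  rw [hMprod, ← Finset.prod_div_distrib]
  refine Finset.prod_congr rfl fun p hpmem => ?_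
  have hpp : p.Prime := Nat.prime_of_mem_primeFactors hpmem
  have ha : 1 ≤ M.factorization p :=
    hpp.factorization_pos_of_dvd hMne (Nat.dvd_of_mem_primeFactors hpmem)
  set b : Fin r → ℕ := fun j => (m j).factorization p with hb
  have hba : ∀ j, b j ≤ M.factorization p := by
    intro j
    rw [hM, lcm_factorization' _ _ (fun i _ => (hm i).ne')]
    exact Finset.le_sup (mem_univ j)
  have hex : ∃ j, b j = M.factorization p := by
    rcases Nat.eq_zero_or_pos r with hr | hr
    · exfalso
      subst hr
      have : M = 1 := by
        rw [hM]
        simp [Finset.lcm_def]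
      rw [this] at hpmem
      simp at hpmem
    · have hne : (Finset.univ : Finset (Fin r)).Nonempty :=
        Finset.univ_nonempty_iff.mpr (Fin.pos_iff_nonempty.mp hr)
      obtain ⟨j, _, hj⟩ := Finset.exists_mem_eq_sup Finset.univ hne
        (fun j => (m j).factorization p)
      refine ⟨j, ?_⟩
      rw [hb, hM, lcm_factorization' _ _ (fun i _ => (hm i).ne'), hj]
  have hfil : (Finset.univ.filter fun j => p ∣ m j)
      = (Finset.univ.filter fun j => 1 ≤ b j) := by
    refine Finset.filter_congr fun j _ => ?_
    rw [hb]
    exact ⟨fun h => (hpp.dvd_iff_one_le_factorization (hm j).ne').mp h,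
      fun h => (hpp.dvd_iff_one_le_factorization (hm j).ne').mpr h⟩
  rw [hfil]
  exact local_value hpp ha b hba hex
end
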